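/- A word u over a three-letter alphabet {a,b,c} is cyclically solvable by a weighted marked graph if and only if it is cyclically solvable by a choice-free net. -/

import Mathlib

/-- A labelled transition system with initial state. -/
structure LTS (S L : Type) where
  tr : S → L → S → Prop
  init : S

namespace LTS

/-- Reachability between states of an LTS (directed paths of arcs). -/
def reach {S L : Type} (A : LTS S L) : S → S → Prop :=
  Relation.ReflTransGen (fun s s' => ∃ t, A.tr s t s')

/-- An LTS is reversible if every state is reachable from the initial state
and the initial state is reachable from every state. -/
def reversible {S L : Type} (A : LTS S L) : Prop :=
  ∀ s : S, A.reach A.init s ∧ A.reach s A.init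

end LTS

/-- Isomorphism of labelled transition systems. -/
def ltsIso {S1 S2 L : Type} (A : LTS S1 L) (B : LTS S2 L) : Prop :=
  ∃ ζ : S1 ≃ S2, ζ A.init = B.init ∧ ∀ s t s', A.tr s t s' ↔ B.tr (ζ s) t (ζ s')

/-- A weighted Petri net with places `P` and transitions `T`:
`pre p t` is the weight of the arc from `p` to `t`, `post t p` of the arc from `t` to `p`. -/
structure PetriNet (P T : Type) where
  pre : P → T → ℕ
  post : T → P → ℕ

namespace PetriNet

variable {P T : Type}

/-- A transition `t` is enabled at marking `M`. -/
def enabled (N : PetriNet P T) (M : P → ℕ) (t : T) : Prop :=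
  ∀ p, N.pre p t ≤ M p

/-- A place `p` is enabled by a marking `M`. -/
def placeEnabled (N : PetriNet P T) (M : P → ℕ) (p : P) : Prop :=
  ∀ t, N.pre p t ≤ M p

/-- The marking obtained by firing `t` at `M`. -/
def fire (N : PetriNet P T) (M : P → ℕ) (t : T) : P → ℕ :=
  fun p => M p - N.pre p t + N.post t p

/-- `M [t⟩ M'`. -/
def step (N : PetriNet P T) (M : P → ℕ) (t : T) (M' : P → ℕ) : Prop :=
  N.enabled M t ∧ M' = N.fire M t

/-- A marking `M'` is reachable from `M` by a finite sequence of firings. -/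
def Reach (N : PetriNet P T) (M M' : P → ℕ) : Prop :=
  Relation.ReflTransGen (fun M1 M2 => ∃ t, N.step M1 t M2) M M'

/-- A sequence of transitions is firable from a marking. -/
def firable (N : PetriNet P T) : (P → ℕ) → List T → Prop
  | _, [] => True
  | M, t :: σ => N.enabled M t ∧ N.firable (N.fire M t) σ

/-- The marking reached after firing a sequence of transitions. -/
def fireSeq (N : PetriNet P T) : (P → ℕ) → List T → (P → ℕ)
  | M, [] => M
  | M, t :: σ => N.fireSeq (N.fire M t) σ

/-- A net is choice-free if every place has at most one output transition. -/
def choiceFree (N : PetriNet P T) : Prop :=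
  ∀ p t t', 0 < N.pre p t → 0 < N.pre p t' → t = t'

/-- A weighted marked graph: each place has at most one output and at most one input transition. -/
def wmg (N : PetriNet P T) : Prop :=
  N.choiceFree ∧ ∀ p t t', 0 < N.post t p → 0 < N.post t' p → t = t'

/-- A net is pure if no place is a side condition of some transition. -/
def isPure (N : PetriNet P T) : Prop :=
  ∀ p t, ¬(0 < N.pre p t ∧ 0 < N.post t p)

/-- Liveness: from every reachable marking, every transition can eventually fire again. -/
def live (N : PetriNet P T) (M0 : P → ℕ) : Prop :=
  ∀ (t : T) (M : P → ℕ), N.Reach M0 M → ∃ M', N.Reach M M' ∧ N.enabled M' t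

/-- The reachability graph of a system, as an LTS on the reachable markings. -/
def RG (N : PetriNet P T) (M0 : P → ℕ) : LTS {M : P → ℕ // N.Reach M0 M} T where
  tr := fun M t M' => N.step M.1 t M'.1
  init := ⟨M0, Relation.ReflTransGen.refl⟩

end PetriNet

/-- A system solves an LTS if its reachability graph is isomorphic to it. -/
def Solves {Pl T S : Type} (N : PetriNet Pl T) (M0 : Pl → ℕ) (A : LTS S T) : Prop :=
  ltsIso (N.RG M0) A

/-- CF-solvability of an LTS. -/
def CFSolvable {S L : Type} (A : LTS S L) : Prop :=
  ∃ (k : ℕ) (N : PetriNet (Fin k) L) (M0 : Fin k → ℕ), N.choiceFree ∧ Solves N M0 A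

/-- WMG-solvability of an LTS. -/
def WMGSolvable {S L : Type} (A : LTS S L) : Prop :=
  ∃ (k : ℕ) (N : PetriNet (Fin k) L) (M0 : Fin k → ℕ), N.wmg ∧ Solves N M0 A

/-- Solvability of an LTS by a pure choice-free system. -/
def PureCFSolvable {S L : Type} (A : LTS S L) : Prop :=
  ∃ (k : ℕ) (N : PetriNet (Fin k) L) (M0 : Fin k → ℕ),
    N.choiceFree ∧ N.isPure ∧ Solves N M0 A

/-- The circular LTS induced by a (nonempty) word `w`. -/
def circLTS {L : Type} (w : List L) (hw : 0 < w.length) : LTS (Fin w.length) L where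
  tr := fun s t s' => t = w.get s ∧ s'.val = (s.val + 1) % w.length
  init := ⟨0, hw⟩

/-- The Parikh vector of a word. -/
def parikh {L : Type} [DecidableEq L] (w : List L) (t : L) : ℕ := w.count t

/-- A vector of naturals is prime if the gcd of its components equals 1. -/
def primeVec {L : Type} [Fintype L] (Υ : L → ℕ) : Prop := Finset.univ.gcd Υ = 1

/-- A word is cyclically solvable by a WMG. -/
def cyclicWMGSolvable {L : Type} (w : List L) : Prop :=
  ∃ (hw : 0 < w.length) (k : ℕ) (N : PetriNet (Fin k) L) (M0 : Fin k → ℕ),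
    N.wmg ∧ Solves N M0 (circLTS w hw)

/-- A word is cyclically solvable by a CF net. -/
def cyclicCFSolvable {L : Type} (w : List L) : Prop :=
  ∃ (hw : 0 < w.length) (k : ℕ) (N : PetriNet (Fin k) L) (M0 : Fin k → ℕ),
    N.choiceFree ∧ Solves N M0 (circLTS w hw)

/-- A circuit net: places `p_0 … p_{k-1}` and transitions `τ 0 … τ (k-1)` arranged in a
single alternating cycle, `τ i` being the unique output of `p_i` and the unique input
of `p_{i+1 mod k}`. -/
def isCircuit {k : ℕ} {L : Type} (hk : 0 < k) (N : PetriNet (Fin k) L) : Prop :=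
  ∃ τ : Fin k ≃ L,
    (∀ (i : Fin k) (t : L), 0 < N.pre i t ↔ t = τ i) ∧
    (∀ (i : Fin k) (t : L), 0 < N.post t i ↔ t = τ ⟨(i.val + k - 1) % k, Nat.mod_lt _ hk⟩)

/-- A word is cyclically solvable by a circuit system. -/
def cyclicCircuitSolvable {L : Type} (v : List L) : Prop :=
  ∃ (hv : 0 < v.length) (k : ℕ) (hk : 0 < k) (N : PetriNet (Fin k) L) (M0 : Fin k → ℕ),
    isCircuit hk N ∧ Solves N M0 (circLTS v hv)

/-- The ordered pair `a b` is circularly adjacent in `w`. -/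
def cAdj {L : Type} (w : List L) (a b : L) : Prop :=
  a ≠ b ∧ ((∃ w1 w2, w = w1 ++ a :: b :: w2) ∨ ∃ w3, w = b :: w3 ++ [a])

/-- The projection of a word on a two-element sub-alphabet, as a word over that sub-alphabet. -/
def projPair {L : Type} [DecidableEq L] (w : List L) (a b : L) :
    List {x : L // x = a ∨ x = b} :=
  w.filterMap (fun x => if h : x = a ∨ x = b then some ⟨x, h⟩ else none)

/-- The Parikh vector `P_jq` of the segment of `w` read circularly from state `s_j`
to state `s_q` (empty when `j = q`). -/
def segParikh {L : Type} [DecidableEq L] (w : List L) (hw : 0 < w.length)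
    (j q : Fin w.length) (t : L) : ℕ :=
  ((List.range ((q.val + w.length - j.val) % w.length)).map
    (fun i => w.get ⟨(j.val + i) % w.length, Nat.mod_lt _ hw⟩)).count t

/-- A region of an LTS. -/
def isRegion {S L : Type} (A : LTS S L) (R : S → ℕ) (B F : L → ℕ) : Prop :=
  ∀ s t s', A.tr s t s' → B t ≤ R s ∧ R s' = R s - B t + F t

/-- `gcd_p`: the gcd of all (nonzero) input and output weights of a place. -/
def gcdPlace {Pl T : Type} [Fintype T] (N : PetriNet Pl T) (p : Pl) : ℕ :=
  Finset.univ.gcd (fun t => Nat.gcd (N.pre p t) (N.post t p))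

/-- Conservativeness of a net. -/
def conservative {Pl T : Type} [Fintype Pl] (N : PetriNet Pl T) : Prop :=
  ∃ X : Pl → ℕ, (∀ p, 1 ≤ X p) ∧
    ∀ t, ∑ p, (X p : ℤ) * ((N.post t p : ℤ) - (N.pre p t : ℤ)) = 0

/-- The P-subnet induced by a family of places. -/
def restrictNet {Pl T : Type} {k : ℕ} (N : PetriNet Pl T) (π : Fin k → Pl) :
    PetriNet (Fin k) T where
  pre := fun i t => N.pre (π i) t
  post := fun t i => N.post t (π i)


namespace Stmt9

variable {L : Type} [Fintype L] [DecidableEq L]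

section CW

variable (w : List L) (hw : 0 < w.length)

/-- cyclic extension of the word -/
def W (q : ℕ) : L := w.get ⟨q % w.length, Nat.mod_lt _ hw⟩

/-- number of occurrences of `t` among the first `q` letters of the cyclic extension -/
def CNT (t : L) (q : ℕ) : ℕ := ((List.range q).map (W w hw)).count t

variable {w hw}

set_option linter.unusedSectionVars false

lemma W_mod (q : ℕ) : W w hw (q % w.length) = W w hw q := by
  unfold W; congr 1; exact Fin.ext (Nat.mod_mod_of_dvd q dvd_rfl)

lemma W_add_n (q : ℕ) : W w hw (q + w.length) = W w hw q := by
  unfold W; congr 1; simp [Nat.add_mod_right]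

lemma W_lt (q : ℕ) (h : q < w.length) : W w hw q = w.get ⟨q, h⟩ := by
  unfold W; congr 1; exact Fin.ext (Nat.mod_eq_of_lt h)

lemma CNT_zero (t : L) : CNT w hw t 0 = 0 := by simp [CNT]

lemma CNT_succ (t : L) (q : ℕ) :
    CNT w hw t (q + 1) = CNT w hw t q + if W w hw q = t then 1 else 0 := by
  unfold CNT
  rw [List.range_succ, List.map_append, List.count_append]
  simp [List.count_cons, List.count_nil]

lemma CNT_n (t : L) : CNT w hw t w.length = w.count t := by
  unfold CNT
  congr 1
  apply List.ext_getElem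
  · simp
  · intro i h1 h2
    simp only [List.getElem_map, List.getElem_range]
    rw [W_lt i h2]
    simp

lemma CNT_add_n (t : L) (q : ℕ) :
    CNT w hw t (q + w.length) = CNT w hw t q + w.count t := by
  induction q with
  | zero => simp [CNT_zero, CNT_n, Nat.zero_add]
  | succ q ih =>
      have : q + 1 + w.length = (q + w.length) + 1 := by ring
      rw [this, CNT_succ, ih, W_add_n, CNT_succ]
      ring

lemma W_mem (q : ℕ) : W w hw q ∈ w := by unfold W; exact List.get_mem _ _

lemma count_W_pos (q : ℕ) : 0 < w.count (W w hw q) :=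
  List.count_pos_iff.mpr (W_mem q)

lemma CNT_eq_zero (t : L) (h : w.count t = 0) (q : ℕ) : CNT w hw t q = 0 := by
  induction q with
  | zero => exact CNT_zero t
  | succ q ih =>
      rw [CNT_succ, ih]
      have : W w hw q ≠ t := by
        intro he
        have := count_W_pos (w := w) (hw := hw) q
        rw [he, h] at this
        exact absurd this (lt_irrefl 0)
      simp [this]


variable (w hw)

/-- token-count functional of the canonical place from `t` to `t'` -/
def val (t t' : L) (q : ℕ) : ℤ :=
  (w.count t' : ℤ) * CNT w hw t q - (w.count t : ℤ) * CNT w hw t' q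

variable {w hw}

lemma val_zero (t t' : L) : val w hw t t' 0 = 0 := by simp [val, CNT_zero]

lemma val_succ (t t' : L) (h : t ≠ t') (q : ℕ) :
    val w hw t t' (q + 1) = val w hw t t' q
      + (if W w hw q = t then (w.count t' : ℤ) else 0)
      - (if W w hw q = t' then (w.count t : ℤ) else 0) := by
  unfold val
  rw [CNT_succ, CNT_succ]
  by_cases h1 : W w hw q = t
  · have h2 : W w hw q ≠ t' := h1 ▸ h
    simp [h1, h2, h]; push_cast; ring
  · by_cases h2 : W w hw q = t'
    · simp [h1, h2, Ne.symm h]; push_cast; ring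
    · simp [h1, h2]

lemma val_add_n (t t' : L) (q : ℕ) : val w hw t t' (q + w.length) = val w hw t t' q := by
  unfold val; rw [CNT_add_n, CNT_add_n]; push_cast; ring

lemma val_mod (t t' : L) (q : ℕ) : val w hw t t' (q % w.length) = val w hw t t' q := by
  induction q using Nat.strong_induction_on with
  | _ q ih =>
    by_cases h : q < w.length
    · rw [Nat.mod_eq_of_lt h]
    · push_neg at h
      have h1 : q - w.length < q := Nat.sub_lt (lt_of_lt_of_le hw h) hw
      have h2 : q - w.length + w.length = q := Nat.sub_add_cancel h
      rw [Nat.mod_eq_sub_mod h, ih _ h1]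
      conv_rhs => rw [← h2]
      rw [val_add_n]

/-- on a segment free of `t'`, `val t t'` is nondecreasing -/
lemma val_mono (t t' : L) (h : t ≠ t') {a b : ℕ} (hab : a ≤ b)
    (hfree : ∀ i, a ≤ i → i < b → W w hw i ≠ t') :
    val w hw t t' a ≤ val w hw t t' b := by
  induction b with
  | zero => rw [Nat.le_zero.mp hab]
  | succ b ih =>
    by_cases hb : a = b + 1
    · rw [hb]
    · have hab' : a ≤ b := by omega
      have := ih hab' (fun i h1 h2 => hfree i h1 (by omega))
      rw [val_succ t t' h b]
      have h3 : W w hw b ≠ t' := hfree b hab' (by omega)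
      simp [h3]
      by_cases h4 : W w hw b = t
      · simp [h4]; have : (0:ℤ) ≤ w.count t' := Int.natCast_nonneg _; omega
      · simp [h4]; omega

/-- the last `t'`-position circularly before `q` has `val` at most `val q + count t` -/
lemma last_occ (t t' : L) (hne : t ≠ t') (hp : 0 < w.count t') (q : ℕ) (hq : q < w.length) :
    ∃ i0, i0 < w.length ∧ W w hw i0 = t' ∧
      val w hw t t' i0 ≤ val w hw t t' q + w.count t := by
  -- there is a t' in [q, q + n)
  have hex : ∃ i, q ≤ i ∧ i < q + w.length ∧ W w hw i = t' := by
    by_contra hno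
    push_neg at hno
    have : CNT w hw t' (q + w.length) ≤ CNT w hw t' q := by
      have aux : ∀ m, CNT w hw t' (q + m) ≤ CNT w hw t' q + 0 →
          m ≤ w.length → True := fun _ _ _ => trivial
      clear aux
      have : ∀ m, q + m ≤ q + w.length → CNT w hw t' (q + m) = CNT w hw t' q := by
        intro m
        induction m with
        | zero => intro; rfl
        | succ m ih =>
          intro hm
          rw [show q + (m+1) = (q+m) + 1 by ring, CNT_succ, ih (by omega)]
          have : W w hw (q+m) ≠ t' := hno (q+m) (by omega) (by omega)
          simp [this]
      exact le_of_eq (this w.length le_rfl)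
    rw [CNT_add_n] at this
    omega
  classical
  -- take the greatest such i
  obtain ⟨i, hi1, hi2, hi3⟩ := hex
  -- use Nat.findGreatest on predicate
  set Pred : ℕ → Prop := fun i => q ≤ i ∧ W w hw i = t' with hPred
  have hPi : Pred i := ⟨hi1, hi3⟩
  set i1 := Nat.findGreatest Pred (q + w.length - 1) with hi1def
  have hPi1 : Pred i1 := by
    have := Nat.findGreatest_spec (m := i) (n := q + w.length - 1) (by omega) hPi
    exact this
  have hi1le : i1 ≤ q + w.length - 1 := Nat.findGreatest_le _
  have hmax : ∀ j, i1 < j → j ≤ q + w.length - 1 → ¬ Pred j := by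
    intro j hj1 hj2
    exact Nat.findGreatest_is_greatest hj1 hj2
  -- val (i1 + 1) = val i1 - count t
  have hstep : val w hw t t' (i1 + 1) = val w hw t t' i1 - w.count t := by
    rw [val_succ t t' hne]
    have h1 : W w hw i1 = t' := hPi1.2
    have h2 : W w hw i1 ≠ t := h1 ▸ (Ne.symm hne)
    simp [h1, h2, Ne.symm hne]
  -- monotone from i1+1 to q + n
  have hmono : val w hw t t' (i1 + 1) ≤ val w hw t t' (q + w.length) := by
    apply val_mono t t' hne (by omega)
    intro j hj1 hj2 hj3
    exact (hmax j (by omega) (by omega)) ⟨by exact le_trans hPi1.1 (by omega), hj3⟩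
  rw [val_add_n] at hmono
  refine ⟨i1 % w.length, Nat.mod_lt _ hw, by rw [W_mod]; exact hPi1.2, ?_⟩
  rw [val_mod]
  omega


lemma sum_cnt_succ (x : L → ℤ) (q : ℕ) :
    ∑ t, x t * CNT w hw t (q+1) = (∑ t, x t * CNT w hw t q) + x (W w hw q) := by
  have h : ∀ t : L, x t * (CNT w hw t (q+1) : ℤ)
      = x t * CNT w hw t q + (if W w hw q = t then x t else 0) := by
    intro t
    rw [CNT_succ]
    push_cast
    split <;> ring
  rw [Finset.sum_congr rfl (fun t _ => h t), Finset.sum_add_distrib,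
      Finset.sum_ite_eq Finset.univ (W w hw q) x]
  simp


end CW

section Sep

/-- in a 3-element type, two elements distinct from both `a` and `b` (with `a ≠ b`) coincide -/
lemma card3_eq (hcard : Fintype.card L = 3) {a b c d : L}
    (hab : a ≠ b) (hca : c ≠ a) (hcb : c ≠ b) (hda : d ≠ a) (hdb : d ≠ b) : c = d := by
  by_contra hcd
  have h4 : ({a, b, c, d} : Finset L).card = 4 := by
    rw [Finset.card_insert_of_notMem (by simp [hab, Ne.symm hca, Ne.symm hda]),
        Finset.card_insert_of_notMem (by simp [Ne.symm hcb, Ne.symm hdb]),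
        Finset.card_insert_of_notMem (by simp [hcd]), Finset.card_singleton]
  have := Finset.card_le_univ ({a, b, c, d} : Finset L)
  rw [h4, hcard] at this
  omega

variable {w : List L} {hw : 0 < w.length}

/-- No-domination property extracted from a choice-free solution. -/
def NoDom (w : List L) (hw : 0 < w.length) : Prop :=
  ∀ i j : ℕ, i < w.length → j < w.length → W w hw j ≠ W w hw i →
    ∃ t : L, ¬((w.count (W w hw i) : ℤ) * CNT w hw t i - (w.count t : ℤ) * CNT w hw (W w hw i) i ≤
        (w.count (W w hw i) : ℤ) * CNT w hw t j - (w.count t : ℤ) * CNT w hw (W w hw i) j)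

/-- pure separation: taking `t := W j`, the value at a `t`-position beats it at any
`t'`-position. -/
lemma pure_sep (hcard : Fintype.card L = 3) (hnd : NoDom w hw)
    {t t' : L} (hne : t ≠ t') {i j : ℕ} (hi : i < w.length) (hj : j < w.length)
    (hWi : W w hw i = t') (hWj : W w hw j = t) :
    val w hw t t' j < val w hw t t' i := by
  by_contra hcon
  push_neg at hcon   -- hcon : val i ≤ val j
  -- NoDom with target t at (position j, other i)
  have h1 := hnd j i hj hi (by rw [hWi, hWj]; exact Ne.symm hne)
  have h2 := hnd i j hi hj (by rw [hWi, hWj]; exact hne)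
  rw [hWj] at h1
  rw [hWi] at h2
  obtain ⟨t1, ht1⟩ := h1
  obtain ⟨t2, ht2⟩ := h2
  push_neg at ht1 ht2
  -- ht1 : g^t_{t1}(j) > g^t_{t1}(i)   (value at the t-position j exceeds that at i)
  -- ht2 : g^{t'}_{t2}(i) > g^{t'}_{t2}(j)
  have hPt : (0:ℤ) < w.count t := by exact_mod_cast (hWj ▸ count_W_pos j)
  have hPt' : (0:ℤ) < w.count t' := by exact_mod_cast (hWi ▸ count_W_pos i)
  have hvj : val w hw t t' j = (w.count t' : ℤ) * CNT w hw t j - (w.count t : ℤ) * CNT w hw t' j := rfl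
  have hvi : val w hw t t' i = (w.count t' : ℤ) * CNT w hw t i - (w.count t : ℤ) * CNT w hw t' i := rfl
  rw [hvj, hvi] at hcon
  -- t1 ≠ t
  have ht1t : t1 ≠ t := by intro hEq; rw [hEq] at ht1; omega
  -- if t1 = t' we contradict hcon directly
  have ht1t' : t1 ≠ t' := by intro hEq; rw [hEq] at ht1; omega
  have ht2t' : t2 ≠ t' := by intro hEq; rw [hEq] at ht2; omega
  have ht2t : t2 ≠ t := by intro hEq; rw [hEq] at ht2; omega
  have h12 : t1 = t2 := card3_eq hcard hne ht1t ht1t' ht2t ht2t'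
  subst h12
  -- the linear identity: count t' * A - count t * B + count t1 * C = 0 where
  -- A = g^t_{t1} j - g^t_{t1} i > 0, B = g^{t'}_{t1} j - g^{t'}_{t1} i < 0, C = val j - val i ≥ 0
  have idj : (w.count t' : ℤ) * ((w.count t : ℤ) * CNT w hw t1 j - (w.count t1 : ℤ) * CNT w hw t j)
      - (w.count t : ℤ) * ((w.count t' : ℤ) * CNT w hw t1 j - (w.count t1 : ℤ) * CNT w hw t' j)
      + (w.count t1 : ℤ) * ((w.count t' : ℤ) * CNT w hw t j - (w.count t : ℤ) * CNT w hw t' j) = 0 := by ring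
  have idi : (w.count t' : ℤ) * ((w.count t : ℤ) * CNT w hw t1 i - (w.count t1 : ℤ) * CNT w hw t i)
      - (w.count t : ℤ) * ((w.count t' : ℤ) * CNT w hw t1 i - (w.count t1 : ℤ) * CNT w hw t' i)
      + (w.count t1 : ℤ) * ((w.count t' : ℤ) * CNT w hw t i - (w.count t : ℤ) * CNT w hw t' i) = 0 := by ring
  have hC : (0:ℤ) ≤ w.count t1 := Int.natCast_nonneg _
  nlinarith [mul_pos hPt' (show (0:ℤ) < ((w.count t : ℤ) * CNT w hw t1 j - (w.count t1 : ℤ) * CNT w hw t j) - ((w.count t : ℤ) * CNT w hw t1 i - (w.count t1 : ℤ) * CNT w hw t i) from by omega),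
    mul_pos hPt (show (0:ℤ) < ((w.count t' : ℤ) * CNT w hw t1 i - (w.count t1 : ℤ) * CNT w hw t' i) - ((w.count t' : ℤ) * CNT w hw t1 j - (w.count t1 : ℤ) * CNT w hw t' j) from by omega),
    mul_nonneg hC (show (0:ℤ) ≤ ((w.count t' : ℤ) * CNT w hw t j - (w.count t : ℤ) * CNT w hw t' j) - ((w.count t' : ℤ) * CNT w hw t i - (w.count t : ℤ) * CNT w hw t' i) from by omega)]

/-- strong separation with margin, needed for nonnegativity of the WMG marking -/
lemma strong_sep (hcard : Fintype.card L = 3) (hnd : NoDom w hw)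
    {t t' : L} (hne : t ≠ t') (hp : 0 < w.count t')
    {j q : ℕ} (hj : j < w.length) (hq : q < w.length) (hWj : W w hw j = t) :
    val w hw t t' j < val w hw t t' q + w.count t := by
  obtain ⟨i0, hi0n, hWi0, hle⟩ := last_occ t t' hne hp q hq
  have := pure_sep hcard hnd hne hi0n hj hWi0 hWj
  omega

end Sep


section PartA

open PetriNet

variable {k : ℕ} {w : List L} {hw : 0 < w.length}
variable {N : PetriNet (Fin k) L} {M0 : Fin k → ℕ}

-- the marking sequence along the cycle, extended periodically
private def Mst (hw : 0 < w.length) (ζ : {M : Fin k → ℕ // N.Reach M0 M} ≃ Fin w.length) (q : ℕ) : Fin k → ℕ :=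
  (ζ.symm ⟨q % w.length, Nat.mod_lt _ hw⟩).1

variable (hcf : N.choiceFree)
variable (ζ : {M : Fin k → ℕ // N.Reach M0 M} ≃ Fin w.length)
variable (hinit : ζ (N.RG M0).init = (circLTS w hw).init)
variable (htr : ∀ s t s', (N.RG M0).tr s t s' ↔ (circLTS w hw).tr (ζ s) t (ζ s'))

include htr in
lemma Mst_step (q : ℕ) : N.step (Mst hw ζ q) (W w hw q) (Mst hw ζ (q+1)) := by
  have h : (circLTS w hw).tr ⟨q % w.length, Nat.mod_lt _ hw⟩ (W w hw q)
      ⟨(q+1) % w.length, Nat.mod_lt _ hw⟩ := by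
    refine ⟨rfl, ?_⟩
    show (q+1) % w.length = (q % w.length + 1) % w.length
    exact ((Nat.mod_modEq q w.length).add_right 1).symm
  have h2 := (htr (ζ.symm ⟨q % w.length, Nat.mod_lt _ hw⟩) (W w hw q)
      (ζ.symm ⟨(q+1) % w.length, Nat.mod_lt _ hw⟩)).mpr
  simp only [Equiv.apply_symm_apply] at h2
  exact h2 h

include htr in
lemma Mst_disabled (q : ℕ) (t : L) (ht : t ≠ W w hw q) : ¬ N.enabled (Mst hw ζ q) t := by
  intro hen
  have hre : N.Reach M0 (N.fire (Mst hw ζ q) t) := by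
    refine Relation.ReflTransGen.tail (ζ.symm ⟨q % w.length, Nat.mod_lt _ hw⟩).2 ⟨t, hen, rfl⟩
  have h2 := (htr (ζ.symm ⟨q % w.length, Nat.mod_lt _ hw⟩) t ⟨N.fire (Mst hw ζ q) t, hre⟩).mp
  simp only [Equiv.apply_symm_apply] at h2
  have h3 := h2 ⟨hen, rfl⟩
  exact ht h3.1

include hinit in
lemma Mst_zero : Mst hw ζ 0 = M0 := by
  have : ζ.symm (circLTS w hw).init = (N.RG M0).init := by
    rw [← hinit, Equiv.symm_apply_apply]
  unfold Mst
  have h0 : (⟨0 % w.length, Nat.mod_lt _ hw⟩ : Fin w.length) = (circLTS w hw).init := by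
    apply Fin.ext; simp [circLTS]
  rw [h0, this]
  rfl

include htr in
lemma Mst_formula (q : ℕ) (p : Fin k) :
    (Mst hw ζ q p : ℤ) = (Mst hw ζ 0 p : ℤ)
      + ∑ t, (N.post t p : ℤ) * CNT w hw t q - ∑ t, (N.pre p t : ℤ) * CNT w hw t q := by
  induction q with
  | zero => simp [CNT_zero]
  | succ q ih =>
    obtain ⟨hen, hf⟩ := Mst_step (hw := hw) ζ htr q
    have hfp : Mst hw ζ (q+1) p = Mst hw ζ q p - N.pre p (W w hw q) + N.post (W w hw q) p := by
      rw [hf]; rfl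
    have hle : N.pre p (W w hw q) ≤ Mst hw ζ q p := hen p
    have hcast : (Mst hw ζ (q+1) p : ℤ)
        = (Mst hw ζ q p : ℤ) - N.pre p (W w hw q) + N.post (W w hw q) p := by
      rw [hfp]; push_cast [hle]; ring
    rw [hcast, ih, sum_cnt_succ (fun t => (N.post t p : ℤ)) q,
        sum_cnt_succ (fun t => (N.pre p t : ℤ)) q]
    ring

include htr hinit in
lemma cycle_id (p : Fin k) :
    ∑ t, (N.post t p : ℤ) * w.count t = ∑ t, (N.pre p t : ℤ) * w.count t := by
  have h := Mst_formula ζ htr w.length p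
  have hM : Mst hw ζ w.length = Mst hw ζ 0 := by
    unfold Mst
    have he : (⟨w.length % w.length, Nat.mod_lt _ hw⟩ : Fin w.length)
        = ⟨0 % w.length, Nat.mod_lt _ hw⟩ := by
      apply Fin.ext; simp
    rw [he]
  rw [hM] at h
  have hc : ∀ t : L, CNT w hw t w.length = w.count t := fun t => CNT_n t
  simp only [hc] at h
  omega

include htr hcf hinit in
lemma noDom_of_cf : NoDom w hw := by
  intro i j hi hj hWji
  by_contra hno
  push_neg at hno
  set t' := W w hw i with ht'
  -- t' is enabled at Mst i, disabled at Mst j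
  have hen : N.enabled (Mst hw ζ i) t' := (Mst_step ζ htr i).1
  have hdis : ¬ N.enabled (Mst hw ζ j) t' := Mst_disabled ζ htr j t' hWji.symm
  rw [PetriNet.enabled] at hdis
  push_neg at hdis
  obtain ⟨p, hp⟩ := hdis
  have hpre0 : ∀ t : L, t ≠ t' → N.pre p t = 0 := by
    intro t ht
    by_contra h0
    have h1 : 0 < N.pre p t := Nat.pos_of_ne_zero h0
    have h2 : 0 < N.pre p t' := lt_of_le_of_lt (Nat.zero_le _) hp
    exact ht (hcf p t t' h1 h2)
  -- consistency for place p
  have hcons : ∑ t, (N.post t p : ℤ) * w.count t = (N.pre p t' : ℤ) * w.count t' := by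
    rw [cycle_id ζ hinit htr p,
      Finset.sum_eq_single t' (fun t _ ht => by rw [hpre0 t ht]; ring) (by simp)]
  -- marking difference at i and j
  have hMi := Mst_formula ζ htr i p
  have hMj := Mst_formula ζ htr j p
  have hprei : ∑ t, (N.pre p t : ℤ) * CNT w hw t i = (N.pre p t' : ℤ) * CNT w hw t' i :=
    Finset.sum_eq_single t' (fun t _ ht => by rw [hpre0 t ht]; push_cast; ring) (by simp)
  have hprej : ∑ t, (N.pre p t : ℤ) * CNT w hw t j = (N.pre p t' : ℤ) * CNT w hw t' j :=
    Finset.sum_eq_single t' (fun t _ ht => by rw [hpre0 t ht]; push_cast; ring) (by simp)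
  rw [hprei] at hMi
  rw [hprej] at hMj
  -- the key inequality: (count t') * (f i - f j) ≤ 0 where f m := ∑ post·CNT m - pre·CNT t' m
  have expand : ∑ t, (N.post t p : ℤ) *
        (((w.count t' : ℤ) * CNT w hw t i - (w.count t : ℤ) * CNT w hw t' i)
         - ((w.count t' : ℤ) * CNT w hw t j - (w.count t : ℤ) * CNT w hw t' j))
      = (w.count t' : ℤ) * ∑ t, (N.post t p : ℤ) * CNT w hw t i
        - (∑ t, (N.post t p : ℤ) * w.count t) * CNT w hw t' i
        - (w.count t' : ℤ) * ∑ t, (N.post t p : ℤ) * CNT w hw t j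
        + (∑ t, (N.post t p : ℤ) * w.count t) * CNT w hw t' j := by
    rw [Finset.mul_sum, Finset.mul_sum, Finset.sum_mul, Finset.sum_mul,
        ← Finset.sum_sub_distrib, ← Finset.sum_sub_distrib, ← Finset.sum_add_distrib]
    exact Finset.sum_congr rfl (fun t _ => by ring)
  have hsum_le : ∑ t, (N.post t p : ℤ) *
        (((w.count t' : ℤ) * CNT w hw t i - (w.count t : ℤ) * CNT w hw t' i)
         - ((w.count t' : ℤ) * CNT w hw t j - (w.count t : ℤ) * CNT w hw t' j)) ≤ 0 := by
    apply Finset.sum_nonpos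
    intro t _
    have := hno t
    have hpost : (0:ℤ) ≤ N.post t p := Int.natCast_nonneg _
    nlinarith
  have hkey : (w.count t' : ℤ) *
      ((∑ t, (N.post t p : ℤ) * CNT w hw t i - (N.pre p t' : ℤ) * CNT w hw t' i)
        - (∑ t, (N.post t p : ℤ) * CNT w hw t j - (N.pre p t' : ℤ) * CNT w hw t' j)) ≤ 0 := by
    have heq : (w.count t' : ℤ) *
        ((∑ t, (N.post t p : ℤ) * CNT w hw t i - (N.pre p t' : ℤ) * CNT w hw t' i)
          - (∑ t, (N.post t p : ℤ) * CNT w hw t j - (N.pre p t' : ℤ) * CNT w hw t' j))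
        = ∑ t, (N.post t p : ℤ) *
            (((w.count t' : ℤ) * CNT w hw t i - (w.count t : ℤ) * CNT w hw t' i)
             - ((w.count t' : ℤ) * CNT w hw t j - (w.count t : ℤ) * CNT w hw t' j)) := by
      rw [expand, hcons]
      ring
    rw [heq]
    exact hsum_le
  -- but f i - f j = Mst i p - Mst j p ≥ 1
  have hfi : (Mst hw ζ i p : ℤ) - (Mst hw ζ j p : ℤ)
      = (∑ t, (N.post t p : ℤ) * CNT w hw t i - (N.pre p t' : ℤ) * CNT w hw t' i)
        - (∑ t, (N.post t p : ℤ) * CNT w hw t j - (N.pre p t' : ℤ) * CNT w hw t' j) := by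
    rw [hMi, hMj]; ring
  have hd1 : (N.pre p t' : ℤ) ≤ Mst hw ζ i p := by exact_mod_cast hen p
  have hd2 : (Mst hw ζ j p : ℤ) < N.pre p t' := by exact_mod_cast hp
  have hcp : (0:ℤ) < w.count t' := by exact_mod_cast count_W_pos i
  nlinarith

include htr hinit in
lemma minor_fact (i j : ℕ) (hi : i < w.length) (hj : j < w.length) (hij : i ≠ j) :
    ∃ t t' : L, (w.count t' : ℤ) * ((CNT w hw t i : ℤ) - CNT w hw t j)
      ≠ (w.count t : ℤ) * ((CNT w hw t' i : ℤ) - CNT w hw t' j) := by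
  by_contra hno
  push_neg at hno
  -- then all places have equal markings at i and j
  have hMeq : Mst hw ζ i = Mst hw ζ j := by
    funext p
    have hMi := Mst_formula ζ htr i p
    have hMj := Mst_formula ζ htr j p
    set t0 := W w hw 0 with ht0
    have hc0 : (0:ℤ) < w.count t0 := by exact_mod_cast count_W_pos 0
    have key : ∀ x : L → ℕ, (∑ t, (x t : ℤ) * w.count t = ∑ t, (N.pre p t : ℤ) * w.count t ∨
        ∑ t, (x t : ℤ) * w.count t = ∑ t, (N.post t p : ℤ) * w.count t) → True := fun _ _ => trivial
    clear key
    have hdiff : ∀ x : L → ℤ, (w.count t0 : ℤ) * (∑ t, x t * CNT w hw t i - ∑ t, x t * CNT w hw t j)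
        = (∑ t, x t * w.count t) * ((CNT w hw t0 i : ℤ) - CNT w hw t0 j) := by
      intro x
      rw [← Finset.sum_sub_distrib, Finset.mul_sum, Finset.sum_mul]
      apply Finset.sum_congr rfl
      intro t _
      have h := hno t t0
      linear_combination (x t) * h
    have hpost := hdiff (fun t => (N.post t p : ℤ))
    have hpre := hdiff (fun t => (N.pre p t : ℤ))
    have hcyc := cycle_id ζ hinit htr p
    have : (w.count t0 : ℤ) * ((Mst hw ζ i p : ℤ) - Mst hw ζ j p) = 0 := by
      rw [hMi, hMj]
      have expand : (Mst hw ζ 0 p : ℤ) + ∑ t, (N.post t p : ℤ) * CNT w hw t i - ∑ t, (N.pre p t : ℤ) * CNT w hw t i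
          - ((Mst hw ζ 0 p : ℤ) + ∑ t, (N.post t p : ℤ) * CNT w hw t j - ∑ t, (N.pre p t : ℤ) * CNT w hw t j)
          = (∑ t, (N.post t p : ℤ) * CNT w hw t i - ∑ t, (N.post t p : ℤ) * CNT w hw t j)
            - (∑ t, (N.pre p t : ℤ) * CNT w hw t i - ∑ t, (N.pre p t : ℤ) * CNT w hw t j) := by ring
      rw [expand]
      nlinarith [hpost, hpre, hcyc]
    have h2 : (Mst hw ζ i p : ℤ) = Mst hw ζ j p := by
      rcases mul_eq_zero.mp this with h | h
      · omega
      · omega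
    exact_mod_cast h2
  -- contradiction with injectivity
  have : ζ.symm ⟨i % w.length, Nat.mod_lt _ hw⟩ = ζ.symm ⟨j % w.length, Nat.mod_lt _ hw⟩ :=
    Subtype.ext hMeq
  have := ζ.symm.injective this
  rw [Fin.mk.injEq, Nat.mod_eq_of_lt hi, Nat.mod_eq_of_lt hj] at this
  exact hij this

end PartA

section PartC

variable (w : List L) (hw : 0 < w.length)

/-- the synthesized weighted marked graph -/
def Nw : PetriNet (L × L) L where
  pre := fun p s =>
    if s = p.2 then
      (if p.1 ≠ p.2 ∧ 0 < w.count p.1 ∧ 0 < w.count p.2 then w.count p.1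
       else if p.1 = p.2 ∧ w.count p.2 = 0 then 1 else 0)
    else 0
  post := fun s p =>
    if s = p.1 ∧ p.1 ≠ p.2 ∧ 0 < w.count p.1 ∧ 0 < w.count p.2 then w.count p.2 else 0

/-- minimum of `val t t'` over one period -/
def vmin (t t' : L) : ℤ :=
  Finset.inf' (Finset.range w.length) ⟨0, Finset.mem_range.mpr hw⟩ (fun q => val w hw t t' q)

/-- the synthesized marking at cyclic state `q` -/
def Mw (q : ℕ) : (L × L) → ℕ := fun p =>
  if p.1 ≠ p.2 ∧ 0 < w.count p.1 ∧ 0 < w.count p.2 then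
    (val w hw p.1 p.2 q - vmin w hw p.1 p.2).toNat
  else 0

variable {w hw}

lemma Nw_pre (t t' s : L) : (Nw w).pre (t, t') s =
    if s = t' then
      (if t ≠ t' ∧ 0 < w.count t ∧ 0 < w.count t' then w.count t
       else if t = t' ∧ w.count t' = 0 then 1 else 0)
    else 0 := rfl

lemma Nw_post (s t t' : L) : (Nw w).post s (t, t') =
    (if s = t ∧ t ≠ t' ∧ 0 < w.count t ∧ 0 < w.count t' then w.count t' else 0) := rfl

lemma Mw_app (q : ℕ) (t t' : L) : Mw w hw q (t, t') =
    if t ≠ t' ∧ 0 < w.count t ∧ 0 < w.count t' then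
      (val w hw t t' q - vmin w hw t t' ).toNat
    else 0 := rfl

lemma Nw_wmg : (Nw w).wmg := by
  constructor
  · intro p t t' h1 h2
    obtain ⟨a, b⟩ := p
    rw [Nw_pre] at h1 h2
    by_cases e1 : t = b
    · by_cases e2 : t' = b
      · rw [e1, e2]
      · rw [if_neg e2] at h2; omega
    · rw [if_neg e1] at h1; omega
  · intro p t t' h1 h2
    obtain ⟨a, b⟩ := p
    rw [Nw_post] at h1 h2
    by_cases e1 : t = a ∧ a ≠ b ∧ 0 < w.count a ∧ 0 < w.count b
    · by_cases e2 : t' = a ∧ a ≠ b ∧ 0 < w.count a ∧ 0 < w.count b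
      · rw [e1.1, e2.1]
      · rw [if_neg e2] at h2; omega
    · rw [if_neg e1] at h1; omega

lemma vmin_le (t t' : L) (q : ℕ) : vmin w hw t t' ≤ val w hw t t' q := by
  rw [← val_mod]
  exact Finset.inf'_le _ (Finset.mem_range.mpr (Nat.mod_lt _ hw))

lemma vmin_exists (t t' : L) : ∃ m, m < w.length ∧ vmin w hw t t' = val w hw t t' m := by
  obtain ⟨m, hm, he⟩ := Finset.exists_mem_eq_inf' ⟨0, Finset.mem_range.mpr hw⟩
    (fun q => val w hw t t' q)
  exact ⟨m, Finset.mem_range.mp hm, he⟩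

lemma Mw_mod (q : ℕ) : Mw w hw (q % w.length) = Mw w hw q := by
  funext p
  unfold Mw
  rw [val_mod]

lemma Mw_step (q : ℕ) : (Nw w).step (Mw w hw q) (W w hw q) (Mw w hw (q+1)) := by
  constructor
  · -- enabled
    intro p
    obtain ⟨t, t'⟩ := p
    rw [Nw_pre, Mw_app]
    by_cases hW : W w hw q = t'
    · rw [if_pos hW]
      by_cases hact : t ≠ t' ∧ 0 < w.count t ∧ 0 < w.count t'
      · rw [if_pos hact, if_pos hact]
        have hWt : ¬ W w hw q = t := by rw [hW]; exact Ne.symm hact.1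
        have hs := val_succ (w := w) (hw := hw) t t' hact.1 q
        rw [if_neg hWt, if_pos hW] at hs
        have h3 := vmin_le (hw := hw) t t' (q+1)
        omega
      · rw [if_neg hact, if_neg hact]
        have hk : ¬ (t = t' ∧ w.count t' = 0) := by
          rintro ⟨h1, h2⟩
          have := count_W_pos (w := w) (hw := hw) q
          rw [hW, h2] at this
          omega
        rw [if_neg hk]
    · rw [if_neg hW]
      exact Nat.zero_le _
  · -- fire
    funext p
    obtain ⟨t, t'⟩ := p
    show Mw w hw (q+1) (t,t')
      = Mw w hw q (t,t') - (Nw w).pre (t,t') (W w hw q) + (Nw w).post (W w hw q) (t,t')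
    rw [Nw_pre, Nw_post, Mw_app, Mw_app]
    by_cases hact : t ≠ t' ∧ 0 < w.count t ∧ 0 < w.count t'
    · rw [if_pos hact, if_pos hact]
      have hs := val_succ (w := w) (hw := hw) t t' hact.1 q
      have hle := vmin_le (hw := hw) t t' q
      have hle1 := vmin_le (hw := hw) t t' (q+1)
      by_cases hW : W w hw q = t'
      · have hWt : ¬ W w hw q = t := by rw [hW]; exact Ne.symm hact.1
        rw [if_neg hWt, if_pos hW] at hs
        rw [if_pos hW, if_pos hact, if_neg (by rintro ⟨h4, -⟩; exact hWt h4)]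
        omega
      · rw [if_neg hW]
        by_cases hWt : W w hw q = t
        · rw [if_pos hWt, if_neg hW] at hs
          rw [if_pos ⟨hWt, hact⟩]
          omega
        · rw [if_neg hWt, if_neg hW] at hs
          rw [if_neg (by rintro ⟨h4, -⟩; exact hWt h4)]
          omega
    · rw [if_neg hact, if_neg hact,
          if_neg (show ¬ (W w hw q = t ∧ t ≠ t' ∧ 0 < w.count t ∧ 0 < w.count t') by
            rintro ⟨-, h⟩; exact hact h)]
      by_cases hW : W w hw q = t'
      · rw [if_pos hW, if_neg hact,
            if_neg (show ¬ (t = t' ∧ w.count t' = 0) by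
              rintro ⟨h1, h2⟩
              have := count_W_pos (w := w) (hw := hw) q
              rw [hW, h2] at this
              omega)]
      · rw [if_neg hW]

lemma Mw_disabled (hcard : Fintype.card L = 3) (hnd : NoDom w hw)
    (q : ℕ) (s : L) (hs : s ≠ W w hw q) : ¬ (Nw w).enabled (Mw w hw q) s := by
  intro hen
  by_cases hcs : w.count s = 0
  · -- kill place (s,s)
    have h := hen (s, s)
    rw [Nw_pre, Mw_app, if_pos rfl, if_neg (by simp), if_pos ⟨rfl, hcs⟩,
        if_neg (by simp)] at h
    omega
  · -- pair place (W q, s)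
    set t := W w hw q with ht
    have hct : 0 < w.count t := count_W_pos q
    have hcs' : 0 < w.count s := Nat.pos_of_ne_zero hcs
    have hact : t ≠ s ∧ 0 < w.count t ∧ 0 < w.count s := ⟨Ne.symm hs, hct, hcs'⟩
    have h := hen (t, s)
    rw [Nw_pre, Mw_app, if_pos rfl, if_pos hact, if_pos hact] at h
    obtain ⟨m, hmn, hme⟩ := vmin_exists (hw := hw) t s
    have hsep := strong_sep hcard hnd (Ne.symm hs) hcs' (Nat.mod_lt q hw) hmn
      (by rw [W_mod])
    rw [val_mod] at hsep
    omega

lemma Mw_uniq (hcard : Fintype.card L = 3) (hnd : NoDom w hw)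
    (q : ℕ) (s : L) (M' : (L × L) → ℕ) (h : (Nw w).step (Mw w hw q) s M') :
    s = W w hw q ∧ M' = Mw w hw (q+1) := by
  have hs : s = W w hw q := by
    by_contra hne
    exact Mw_disabled hcard hnd q s hne h.1
  subst hs
  exact ⟨rfl, by rw [h.2, (Mw_step q).2]⟩

lemma Mw_reach (m : ℕ) : (Nw w).Reach (Mw w hw 0) (Mw w hw m) := by
  induction m with
  | zero => exact Relation.ReflTransGen.refl
  | succ m ih => exact Relation.ReflTransGen.tail ih ⟨W w hw m, Mw_step m⟩

lemma Mw_reach_char (hcard : Fintype.card L = 3) (hnd : NoDom w hw)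
    (M : (L × L) → ℕ) (h : (Nw w).Reach (Mw w hw 0) M) : ∃ m, M = Mw w hw m := by
  induction h with
  | refl => exact ⟨0, rfl⟩
  | tail hab hbc ih =>
    obtain ⟨m, rfl⟩ := ih
    obtain ⟨t, hstep⟩ := hbc
    obtain ⟨-, h2⟩ := Mw_uniq hcard hnd m t _ hstep
    exact ⟨m + 1, h2⟩

lemma Mw_inj (hminor : ∀ i j : ℕ, i < w.length → j < w.length → i ≠ j →
      ∃ t t' : L, (w.count t' : ℤ) * ((CNT w hw t i : ℤ) - CNT w hw t j)
        ≠ (w.count t : ℤ) * ((CNT w hw t' i : ℤ) - CNT w hw t' j))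
    (i j : ℕ) (hi : i < w.length) (hj : j < w.length) (hij : i ≠ j) :
    Mw w hw i ≠ Mw w hw j := by
  obtain ⟨t, t', hm⟩ := hminor i j hi hj hij
  have htt' : t ≠ t' := by rintro rfl; exact hm (by ring)
  have hct : 0 < w.count t := by
    rcases Nat.eq_zero_or_pos (w.count t) with h0 | h
    · exfalso
      apply hm
      rw [CNT_eq_zero t h0, CNT_eq_zero t h0, h0]
      push_cast
      ring
    · exact h
  have hct' : 0 < w.count t' := by
    rcases Nat.eq_zero_or_pos (w.count t') with h0 | h
    · exfalso
      apply hm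
      rw [CNT_eq_zero t' h0, CNT_eq_zero t' h0, h0]
      push_cast
      ring
    · exact h
  have hval : val w hw t t' i ≠ val w hw t t' j := by
    intro he
    apply hm
    unfold val at he
    linear_combination he
  intro he
  have h2 := congrFun he (t, t')
  rw [Mw_app, Mw_app, if_pos ⟨htt', hct, hct'⟩, if_pos ⟨htt', hct, hct'⟩] at h2
  have hl1 := vmin_le (hw := hw) t t' i
  have hl2 := vmin_le (hw := hw) t t' j
  omega

lemma Nw_solves (hcard : Fintype.card L = 3) (hnd : NoDom w hw)
    (hminor : ∀ i j : ℕ, i < w.length → j < w.length → i ≠ j →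
      ∃ t t' : L, (w.count t' : ℤ) * ((CNT w hw t i : ℤ) - CNT w hw t j)
        ≠ (w.count t : ℤ) * ((CNT w hw t' i : ℤ) - CNT w hw t' j)) :
    Solves (Nw w) (Mw w hw 0) (circLTS w hw) := by
  classical
  set F : Fin w.length → {M : (L × L) → ℕ // (Nw w).Reach (Mw w hw 0) M} :=
    fun q => ⟨Mw w hw q.val, Mw_reach q.val⟩ with hF
  have hFinj : Function.Injective F := by
    intro q q' h
    by_contra hne
    exact Mw_inj hminor q.val q'.val q.isLt q'.isLt (fun hc => hne (Fin.ext hc))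
      (congrArg Subtype.val h)
  have hFsurj : Function.Surjective F := by
    intro M
    obtain ⟨m, hm⟩ := Mw_reach_char hcard hnd M.1 M.2
    refine ⟨⟨m % w.length, Nat.mod_lt _ hw⟩, ?_⟩
    apply Subtype.ext
    show Mw w hw (m % w.length) = M.1
    rw [Mw_mod, hm]
  have hFbij : Function.Bijective F := ⟨hFinj, hFsurj⟩
  set e := Equiv.ofBijective F hFbij with he
  refine ⟨e.symm, ?_, ?_⟩
  · -- init
    have h0 : ((Nw w).RG (Mw w hw 0)).init = F ⟨0, hw⟩ := by
      apply Subtype.ext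
      rfl
    rw [h0]
    show e.symm (e ⟨0, hw⟩) = _
    rw [Equiv.symm_apply_apply]
    rfl
  · -- transitions
    intro s t s'
    have hs : s = F (e.symm s) := (e.apply_symm_apply s).symm
    have hs' : s' = F (e.symm s') := (e.apply_symm_apply s').symm
    set q := e.symm s
    set q' := e.symm s'
    rw [hs, hs']
    show (Nw w).step (Mw w hw q.val) t (Mw w hw q'.val) ↔ _
    constructor
    · intro hstep
      obtain ⟨h1, h2⟩ := Mw_uniq hcard hnd q.val t _ hstep
      have h3 : Mw w hw q'.val = Mw w hw ((q.val + 1) % w.length) := by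
        rw [Mw_mod, h2]
      have h4 : q'.val = (q.val + 1) % w.length := by
        by_contra hne
        exact Mw_inj hminor q'.val ((q.val + 1) % w.length) q'.isLt
          (Nat.mod_lt _ hw) hne h3
      exact ⟨h1.trans (W_lt q.val q.isLt), h4⟩
    · rintro ⟨h1, h2⟩
      have h3 : Mw w hw q'.val = Mw w hw (q.val + 1) := by
        rw [show q'.val = (q.val + 1) % w.length from h2, Mw_mod]
      have hWq : W w hw q.val = t := (W_lt q.val q.isLt).trans h1.symm
      rw [h3, ← hWq]
      exact Mw_step q.val

end PartC

section Reindex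

/-- transport a solving system along a bijection of places -/
lemma reindex_solves {ρ T S : Type} [Fintype ρ] (N : PetriNet ρ T) (M0 : ρ → ℕ) (A : LTS S T)
    (hwmg : N.wmg) (hs : Solves N M0 A) :
    ∃ (k : ℕ) (N' : PetriNet (Fin k) T) (M0' : Fin k → ℕ), N'.wmg ∧ Solves N' M0' A := by
  classical
  set e := Fintype.equivFin ρ with he
  set N' : PetriNet (Fin (Fintype.card ρ)) T :=
    ⟨fun p t => N.pre (e.symm p) t, fun t p => N.post t (e.symm p)⟩ with hN'
  set M0' : Fin (Fintype.card ρ) → ℕ := fun p => M0 (e.symm p) with hM0'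
  have hstep_iff : ∀ (M1 : Fin (Fintype.card ρ) → ℕ) (t : T) M2,
      N'.step M1 t M2 ↔ N.step (M1 ∘ e) t (M2 ∘ e) := by
    intro M1 t M2
    constructor
    · rintro ⟨hen, hf⟩
      refine ⟨fun p => by simpa [hN'] using hen (e p), ?_⟩
      funext p
      have := congrFun hf (e p)
      simpa [PetriNet.fire, hN'] using this
    · rintro ⟨hen, hf⟩
      refine ⟨fun p => by simpa using hen (e.symm p), ?_⟩
      funext p
      have := congrFun hf (e.symm p)
      simpa [PetriNet.fire] using this
  have hreach1 : ∀ M, N'.Reach M0' M → N.Reach M0 (M ∘ e) := by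
    intro M h
    have h0 : M0' ∘ e = M0 := by funext p; simp [hM0']
    have hstep' : ∀ (M1 M2 : Fin (Fintype.card ρ) → ℕ),
        (∃ t, N'.step M1 t M2) → ∃ t, N.step (M1 ∘ e) t (M2 ∘ e) := by
      rintro M1 M2 ⟨t, ht⟩
      exact ⟨t, (hstep_iff M1 t M2).mp ht⟩
    have := Relation.ReflTransGen.lift (p := fun M1 M2 => ∃ t, N.step M1 t M2) (fun (M : Fin (Fintype.card ρ) → ℕ) => M ∘ e) hstep' _ _ h
    simp only [Function.onFun] at this
    rwa [h0] at this
  have hreach2 : ∀ M, N.Reach M0 M → N'.Reach M0' (M ∘ e.symm) := by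
    intro M h
    have h0 : M0 ∘ e.symm = M0' := by funext p; simp [hM0']
    have hstep' : ∀ (M1 M2 : ρ → ℕ),
        (∃ t, N.step M1 t M2) → ∃ t, N'.step (M1 ∘ e.symm) t (M2 ∘ e.symm) := by
      rintro M1 M2 ⟨t, ht⟩
      refine ⟨t, (hstep_iff (M1 ∘ e.symm) t (M2 ∘ e.symm)).mpr ?_⟩
      have ha : (M1 ∘ e.symm) ∘ e = M1 := by funext p; simp
      have hb : (M2 ∘ e.symm) ∘ e = M2 := by funext p; simp
      rw [ha, hb]
      exact ht
    have := Relation.ReflTransGen.lift (p := fun M1 M2 => ∃ t, N'.step M1 t M2) (fun (M : ρ → ℕ) => M ∘ e.symm) hstep' _ _ h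
    simp only [Function.onFun] at this
    rwa [h0] at this
  set Θ : {M : Fin (Fintype.card ρ) → ℕ // N'.Reach M0' M} ≃ {M : ρ → ℕ // N.Reach M0 M} :=
    { toFun := fun M => ⟨M.1 ∘ e, hreach1 M.1 M.2⟩
      invFun := fun M => ⟨M.1 ∘ e.symm, hreach2 M.1 M.2⟩
      left_inv := fun M => Subtype.ext (by funext p; simp)
      right_inv := fun M => Subtype.ext (by funext p; simp) } with hΘ
  obtain ⟨ζ, hinit, htr⟩ := hs
  refine ⟨Fintype.card ρ, N', M0', ⟨?_, ?_⟩, Θ.trans ζ, ?_, ?_⟩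
  · intro p t t' h1 h2
    exact hwmg.1 (e.symm p) t t' h1 h2
  · intro p t t' h1 h2
    exact hwmg.2 (e.symm p) t t' h1 h2
  · rw [← hinit]
    show ζ (Θ _) = ζ _
    congr 1
    apply Subtype.ext
    funext p
    show M0' (e p) = M0 p
    simp [hM0']
  · intro s t s'
    have h1 : ((N'.RG M0').tr s t s') ↔ ((N.RG M0).tr (Θ s) t (Θ s')) := by
      show N'.step s.1 t s'.1 ↔ N.step (s.1 ∘ e) t (s'.1 ∘ e)
      exact hstep_iff s.1 t s'.1
    rw [h1]
    exact htr (Θ s) t (Θ s')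

end Reindex

end Stmt9

theorem stmt9 {L : Type} [Fintype L] [DecidableEq L] (hcard : Fintype.card L = 3)
    (u : List L) : cyclicWMGSolvable u ↔ cyclicCFSolvable u := by
  constructor
  · rintro ⟨hw, k, N, M0, hwmg, hs⟩
    exact ⟨hw, k, N, M0, hwmg.1, hs⟩
  · rintro ⟨hw, k, N, M0, hcf, hs⟩
    obtain ⟨ζ, hinit, htr⟩ := hs
    have hnd : Stmt9.NoDom u hw := Stmt9.noDom_of_cf hcf ζ hinit htr
    have hminor := fun i j hi hj hij => Stmt9.minor_fact ζ hinit htr i j hi hj hij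
    have hsol := Stmt9.Nw_solves hcard hnd hminor
    obtain ⟨k', N', M0', hwmg', hs'⟩ :=
      Stmt9.reindex_solves (Stmt9.Nw u) (Stmt9.Mw u hw 0) (circLTS u hw) Stmt9.Nw_wmg hsol
    exact ⟨hw, k', N', M0', hwmg', hs'⟩
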